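/- Let k ≥ 1 be an integer, c = (c₁, c₂) ∈ ℂ², and let w ∈ ℂ with w ≠ 0 and w² ≠ 1; fix r₁, r₂ ∈ ℂ with r₁² = 1 + w, r₂² = 1 − w and set A₁ := 1/(2r₁) + 1/(2·i·r₂), A₂ := 1/(2r₁) − 1/(2·i·r₂). Let a₁, a₂, b₁, b₂ ∈ ℂ and set L₁(z₁, z₂) := a₁z₁ + a₂z₂, L₂(z₁, z₂) := b₁z₁ + b₂z₂; let Φ₁, Ψ₁ : ℂ → ℂ satisfy Φ₁(t + c₂) = Φ₁(t) and Ψ₁(t + c₂) = Ψ₁(t) for all t ∈ ℂ; and let d₁, d₂, d₃, d₄ ∈ ℂ satisfy exp(L₁(c) + d₁ − d₂) = a₁ᵏ, exp(L₁(c) + d₂ − d₁) = a₁ᵏ, exp(L₂(c) + d₃ − d₄) = b₁ᵏ and exp(L₂(c) + d₄ − d₃) = b₁ᵏ. Define f(z₁, z₂) := (A₂·exp(L₂(z) + Ψ₁(z₂) − L₂(c) + d₄) + A₁·exp(L₁(z) + Φ₁(z₂) − L₁(c) + d₂))/√2 and g(z₁, z₂) := (A₂·exp(L₁(z) + Φ₁(z₂)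 − L₁(c) + d₁) + A₁·exp(L₂(z) + Ψ₁(z₂) − L₂(c) + d₃))/√2. Then for all (z₁, z₂) ∈ ℂ²: (∂ᵏf/∂z₁ᵏ)(z)² + 2w·(∂ᵏf/∂z₁ᵏ)(z)·g(z₁ + c₁, z₂ + c₂) + g(z₁ + c₁, z₂ + c₂)² = exp(L₁(z) + L₂(z) + Φ₁(z₂) + Ψ₁(z₂) + d₁ + d₃) and (∂ᵏg/∂z₁ᵏ)(z)² + 2w·(∂ᵏg/∂z₁ᵏ)(z)·f(z₁ + c₁, z₂ + c₂) + f(z₁ + c₁, z₂ + c₂)² = exp(L₁(z) + L₂(z) + Φ₁(z₂) + Ψ₁(z₂) + d₂ + d₄). -/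

import Mathlib

lemma aux_iter (a b C D u v s : ℂ) : ∀ (k : ℕ) (z : ℂ),
    iteratedDeriv k (fun t => (u * Complex.exp (a * t + C) + v * Complex.exp (b * t + D)) / s) z
      = (u * a ^ k * Complex.exp (a * z + C) + v * b ^ k * Complex.exp (b * z + D)) / s := by
  intro k
  induction k generalizing u v with
  | zero => simp
  | succ n ih =>
    intro z
    rw [iteratedDeriv_succ']
    have hderiv : (deriv fun t => (u * Complex.exp (a * t + C) + v * Complex.exp (b * t + D)) / s)
        = fun t => ((u * a) * Complex.exp (a * t + C) + (v * b) * Complex.exp (b * t + D)) / s := by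
      funext t
      have ha : HasDerivAt (fun t : ℂ => a * t + C) a t := by
        simpa using ((hasDerivAt_id t).const_mul a).add_const C
      have hb : HasDerivAt (fun t : ℂ => b * t + D) b t := by
        simpa using ((hasDerivAt_id t).const_mul b).add_const D
      have h1 := ((ha.cexp.const_mul u).add (hb.cexp.const_mul v)).div_const s
      have h2 : HasDerivAt
          (fun t => (u * Complex.exp (a * t + C) + v * Complex.exp (b * t + D)) / s)
          (((u * a) * Complex.exp (a * t + C) + (v * b) * Complex.exp (b * t + D)) / s) t := by
        exact h1.congr_deriv (by ring)
      exact h2.deriv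
    rw [hderiv, ih (u * a) (v * b)]
    ring_nf

lemma key (w r₁ r₂ A₁ A₂ s : ℂ) (hw2 : w ^ 2 ≠ 1)
    (hr₁ : r₁ ^ 2 = 1 + w) (hr₂ : r₂ ^ 2 = 1 - w)
    (hA₁ : A₁ = 1 / (2 * r₁) + 1 / (2 * Complex.I * r₂))
    (hA₂ : A₂ = 1 / (2 * r₁) - 1 / (2 * Complex.I * r₂))
    (hs : s ^ 2 = 2) (P Q : ℂ) :
    ((A₁ * P + A₂ * Q) / s) ^ 2 + 2 * w * ((A₁ * P + A₂ * Q) / s) * ((A₂ * P + A₁ * Q) / s)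
      + ((A₂ * P + A₁ * Q) / s) ^ 2 = P * Q := by
  have h1w : (1 : ℂ) + w ≠ 0 := fun h => hw2 (by linear_combination (w - 1) * h)
  have h2w : (1 : ℂ) - w ≠ 0 := fun h => hw2 (by linear_combination (-w - 1) * h)
  have hr1 : r₁ ≠ 0 := by intro h; rw [h] at hr₁; exact h1w (by simpa using hr₁.symm)
  have hr2 : r₂ ≠ 0 := by intro h; rw [h] at hr₂; exact h2w (by simpa using hr₂.symm)
  have hI : Complex.I ≠ 0 := Complex.I_ne_zero
  have hsne : s ≠ 0 := by intro h; rw [h] at hs; simp at hs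
  have hI2 : Complex.I ^ 2 = -1 := Complex.I_sq
  obtain ⟨X, hX⟩ : ∃ X : ℂ, X = 1 / (2 * r₁) := ⟨_, rfl⟩
  obtain ⟨Y, hY⟩ : ∃ Y : ℂ, Y = 1 / (2 * Complex.I * r₂) := ⟨_, rfl⟩
  rw [← hX, ← hY] at hA₁ hA₂
  have hx : 2 * r₁ * X = 1 := by rw [hX]; field_simp
  have hy : 2 * Complex.I * r₂ * Y = 1 := by rw [hY]; field_simp
  have q1 : A₁ ^ 2 + A₂ ^ 2 + 2 * w * (A₁ * A₂) = 0 := by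
    rw [hA₁, hA₂]
    linear_combination (-2 * X ^ 2) * hr₁ - 2 * Y ^ 2 * hr₂ + (r₁ * X + 1 / 2) * hx
      - (Complex.I * r₂ * Y + 1 / 2) * hy + 2 * r₂ ^ 2 * Y ^ 2 * hI2
  have q2 : 4 * (A₁ * A₂) + 2 * w * (A₁ ^ 2 + A₂ ^ 2) = 2 := by
    rw [hA₁, hA₂]
    linear_combination (-4 * X ^ 2) * hr₁ + 4 * Y ^ 2 * hr₂ + (2 * r₁ * X + 1) * hx
      + (2 * Complex.I * r₂ * Y + 1) * hy - 4 * r₂ ^ 2 * Y ^ 2 * hI2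
  have hN : (A₁ * P + A₂ * Q) ^ 2 + 2 * w * ((A₁ * P + A₂ * Q) * (A₂ * P + A₁ * Q))
      + (A₂ * P + A₁ * Q) ^ 2 = 2 * (P * Q) := by
    linear_combination (P ^ 2 + Q ^ 2) * q1 + (P * Q) * q2
  have hform : ((A₁ * P + A₂ * Q) / s) ^ 2
        + 2 * w * ((A₁ * P + A₂ * Q) / s) * ((A₂ * P + A₁ * Q) / s)
        + ((A₂ * P + A₁ * Q) / s) ^ 2
      = ((A₁ * P + A₂ * Q) ^ 2 + 2 * w * ((A₁ * P + A₂ * Q) * (A₂ * P + A₁ * Q))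
        + (A₂ * P + A₁ * Q) ^ 2) / s ^ 2 := by ring
  rw [hform, hN, hs]
  ring

theorem stmt_12 (k : ℕ) (hk : 1 ≤ k) (c₁ c₂ : ℂ) (w r₁ r₂ A₁ A₂ : ℂ)
    (hw : w ≠ 0) (hw2 : w ^ 2 ≠ 1)
    (hr₁ : r₁ ^ 2 = 1 + w) (hr₂ : r₂ ^ 2 = 1 - w)
    (hA₁ : A₁ = 1 / (2 * r₁) + 1 / (2 * Complex.I * r₂))
    (hA₂ : A₂ = 1 / (2 * r₁) - 1 / (2 * Complex.I * r₂))
    (a₁ a₂ b₁ b₂ : ℂ) (L₁ L₂ : ℂ → ℂ → ℂ)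
    (hL₁ : ∀ z₁ z₂, L₁ z₁ z₂ = a₁ * z₁ + a₂ * z₂)
    (hL₂ : ∀ z₁ z₂, L₂ z₁ z₂ = b₁ * z₁ + b₂ * z₂)
    (Φ₁ Ψ₁ : ℂ → ℂ) (hΦ₁ : ∀ t, Φ₁ (t + c₂) = Φ₁ t) (hΨ₁ : ∀ t, Ψ₁ (t + c₂) = Ψ₁ t)
    (d₁ d₂ d₃ d₄ : ℂ)
    (h₁ : Complex.exp (L₁ c₁ c₂ + d₁ - d₂) = a₁ ^ k)
    (h₂ : Complex.exp (L₁ c₁ c₂ + d₂ - d₁) = a₁ ^ k)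
    (h₃ : Complex.exp (L₂ c₁ c₂ + d₃ - d₄) = b₁ ^ k)
    (h₄ : Complex.exp (L₂ c₁ c₂ + d₄ - d₃) = b₁ ^ k)
    (f g : ℂ → ℂ → ℂ)
    (hf : ∀ z₁ z₂, f z₁ z₂ = (A₂ * Complex.exp (L₂ z₁ z₂ + Ψ₁ z₂ - L₂ c₁ c₂ + d₄)
      + A₁ * Complex.exp (L₁ z₁ z₂ + Φ₁ z₂ - L₁ c₁ c₂ + d₂)) / (Real.sqrt 2 : ℂ))
    (hg : ∀ z₁ z₂, g z₁ z₂ = (A₂ * Complex.exp (L₁ z₁ z₂ + Φ₁ z₂ - L₁ c₁ c₂ + d₁)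
      + A₁ * Complex.exp (L₂ z₁ z₂ + Ψ₁ z₂ - L₂ c₁ c₂ + d₃)) / (Real.sqrt 2 : ℂ)) :
    ∀ z₁ z₂ : ℂ,
      (iteratedDeriv k (fun t => f t z₂) z₁) ^ 2
          + 2 * w * (iteratedDeriv k (fun t => f t z₂) z₁) * g (z₁ + c₁) (z₂ + c₂)
          + g (z₁ + c₁) (z₂ + c₂) ^ 2
        = Complex.exp (L₁ z₁ z₂ + L₂ z₁ z₂ + Φ₁ z₂ + Ψ₁ z₂ + d₁ + d₃) ∧
      (iteratedDeriv k (fun t => g t z₂) z₁) ^ 2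
          + 2 * w * (iteratedDeriv k (fun t => g t z₂) z₁) * f (z₁ + c₁) (z₂ + c₂)
          + f (z₁ + c₁) (z₂ + c₂) ^ 2
        = Complex.exp (L₁ z₁ z₂ + L₂ z₁ z₂ + Φ₁ z₂ + Ψ₁ z₂ + d₂ + d₄) := by
  intro z₁ z₂
  set s : ℂ := (Real.sqrt 2 : ℂ) with hsdef
  have hs2 : s ^ 2 = 2 := by
    rw [hsdef, ← Complex.ofReal_pow, Real.sq_sqrt (by norm_num : (0:ℝ) ≤ 2)]
    norm_num
  -- shorthands
  set E₂ : ℂ := Complex.exp (a₁ * z₁ + (a₂ * z₂ + Φ₁ z₂ - L₁ c₁ c₂ + d₂)) with hE₂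
  set F₄ : ℂ := Complex.exp (b₁ * z₁ + (b₂ * z₂ + Ψ₁ z₂ - L₂ c₁ c₂ + d₄)) with hF₄
  set E₁ : ℂ := Complex.exp (a₁ * z₁ + (a₂ * z₂ + Φ₁ z₂ - L₁ c₁ c₂ + d₁)) with hE₁
  set F₃ : ℂ := Complex.exp (b₁ * z₁ + (b₂ * z₂ + Ψ₁ z₂ - L₂ c₁ c₂ + d₃)) with hF₃
  -- derivative of f
  have hfun : (fun t => f t z₂)
      = fun t => (A₁ * Complex.exp (a₁ * t + (a₂ * z₂ + Φ₁ z₂ - L₁ c₁ c₂ + d₂))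
        + A₂ * Complex.exp (b₁ * t + (b₂ * z₂ + Ψ₁ z₂ - L₂ c₁ c₂ + d₄))) / s := by
    funext t
    rw [hf, hL₁, hL₂]
    ring_nf
  have hgfun : (fun t => g t z₂)
      = fun t => (A₂ * Complex.exp (a₁ * t + (a₂ * z₂ + Φ₁ z₂ - L₁ c₁ c₂ + d₁))
        + A₁ * Complex.exp (b₁ * t + (b₂ * z₂ + Ψ₁ z₂ - L₂ c₁ c₂ + d₃))) / s := by
    funext t
    rw [hg, hL₁, hL₂]
    ring_nf
  have hdf : iteratedDeriv k (fun t => f t z₂) z₁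
      = (A₁ * (a₁ ^ k * E₂) + A₂ * (b₁ ^ k * F₄)) / s := by
    rw [hfun, aux_iter]
    rw [hE₂, hF₄]; ring
  have hdg : iteratedDeriv k (fun t => g t z₂) z₁
      = (A₂ * (a₁ ^ k * E₁) + A₁ * (b₁ ^ k * F₃)) / s := by
    rw [hgfun, aux_iter]
    rw [hE₁, hF₃]; ring
  -- shifted values
  have hgc : g (z₁ + c₁) (z₂ + c₂) = (A₂ * (a₁ ^ k * E₂) + A₁ * (b₁ ^ k * F₄)) / s := by
    rw [hg, hΦ₁, hΨ₁]
    congr 2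
    · rw [← h₁, hE₂, ← Complex.exp_add]
      congr 1
      rw [hL₁ (z₁ + c₁), hL₁ c₁ c₂]; ring
    · rw [← h₃, hF₄, ← Complex.exp_add]
      congr 1
      rw [hL₂ (z₁ + c₁), hL₂ c₁ c₂]; ring
  have hfc : f (z₁ + c₁) (z₂ + c₂) = (A₁ * (a₁ ^ k * E₁) + A₂ * (b₁ ^ k * F₃)) / s := by
    rw [hf, hΦ₁, hΨ₁]
    rw [add_comm (A₂ * Complex.exp (L₂ (z₁ + c₁) (z₂ + c₂) + Ψ₁ z₂ - L₂ c₁ c₂ + d₄))]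
    congr 2
    · rw [← h₂, hE₁, ← Complex.exp_add]
      congr 1
      rw [hL₁ (z₁ + c₁), hL₁ c₁ c₂]; ring
    · rw [← h₄, hF₃, ← Complex.exp_add]
      congr 1
      rw [hL₂ (z₁ + c₁), hL₂ c₁ c₂]; ring
  -- RHS values
  have hrhs₁ : Complex.exp (L₁ z₁ z₂ + L₂ z₁ z₂ + Φ₁ z₂ + Ψ₁ z₂ + d₁ + d₃)
      = (a₁ ^ k * E₂) * (b₁ ^ k * F₄) := by
    rw [← h₁, ← h₃, hE₂, hF₄, ← Complex.exp_add, ← Complex.exp_add, ← Complex.exp_add]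
    congr 1
    rw [hL₁ z₁ z₂, hL₂ z₁ z₂]; ring
  have hrhs₂ : Complex.exp (L₁ z₁ z₂ + L₂ z₁ z₂ + Φ₁ z₂ + Ψ₁ z₂ + d₂ + d₄)
      = (a₁ ^ k * E₁) * (b₁ ^ k * F₃) := by
    rw [← h₂, ← h₄, hE₁, hF₃, ← Complex.exp_add, ← Complex.exp_add, ← Complex.exp_add]
    congr 1
    rw [hL₁ z₁ z₂, hL₂ z₁ z₂]; ring
  constructor
  · rw [hdf, hgc, hrhs₁]
    exact key w r₁ r₂ A₁ A₂ s hw2 hr₁ hr₂ hA₁ hA₂ hs2 (a₁ ^ k * E₂) (b₁ ^ k * F₄)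
  · rw [hdg, hfc, hrhs₂]
    have := key w r₁ r₂ A₁ A₂ s hw2 hr₁ hr₂ hA₁ hA₂ hs2 (b₁ ^ k * F₃) (a₁ ^ k * E₁)
    calc ((A₂ * (a₁ ^ k * E₁) + A₁ * (b₁ ^ k * F₃)) / s) ^ 2
          + 2 * w * ((A₂ * (a₁ ^ k * E₁) + A₁ * (b₁ ^ k * F₃)) / s)
            * ((A₁ * (a₁ ^ k * E₁) + A₂ * (b₁ ^ k * F₃)) / s)
          + ((A₁ * (a₁ ^ k * E₁) + A₂ * (b₁ ^ k * F₃)) / s) ^ 2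
        = ((A₁ * (b₁ ^ k * F₃) + A₂ * (a₁ ^ k * E₁)) / s) ^ 2
          + 2 * w * ((A₁ * (b₁ ^ k * F₃) + A₂ * (a₁ ^ k * E₁)) / s)
            * ((A₂ * (b₁ ^ k * F₃) + A₁ * (a₁ ^ k * E₁)) / s)
          + ((A₂ * (b₁ ^ k * F₃) + A₁ * (a₁ ^ k * E₁)) / s) ^ 2 := by ring
      _ = (b₁ ^ k * F₃) * (a₁ ^ k * E₁) := this
      _ = (a₁ ^ k * E₁) * (b₁ ^ k * F₃) := by ring
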